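/- arXiv:math/0307029 — 3 statements merged into one kernel-verified Lean document; each statement's English description precedes it below -/
import Mathlib

section
/- Let g ≥ 1 and let Δ = ∑_{j=-g}^{g} a_j U^j be a symmetric Laurent polynomial with integer coefficients (a_{-j} = a_j for all j) whose top coefficient a_g is nonzero. For an integer q ≥ 1 define S_q := (X^{(-1,0)} − X^{(1,0)})^{2g} · ∑_{j=-g}^{g} a_j X^{(2j, 2jq)} ∈ ℤ[ℤ × ℤ]. Then every pair (a,b) ∈ ℤ × ℤ in the support of S_q satisfies |b| ≤ 2gq and |a| ≤ 4g, and the maximum of |b| over the support of S_q is exactly 2gq (it is attained at (0, 2gq)). -/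
/-- With `S_q := (X^{(-1,0)} − X^{(1,0)})^{2g} · ∑_{j=-g}^{g} a_j X^{(2j,2jq)}`
in `ℤ[ℤ × ℤ]`, where `g ≥ 1`, `q ≥ 1`, the coefficients `a_j` are symmetric and `a_g ≠ 0`:
every `(a,b)` in the support of `S_q` satisfies `|b| ≤ 2gq` and `|a| ≤ 4g`, and the maximum of
`|b|` over the support is exactly `2gq`, attained at `(0, 2gq)`. -/
theorem support_bounds_and_max
    (g : ℕ) (hg : 1 ≤ g) (a : ℤ → ℤ)
    (hsym : ∀ j : ℤ, a (-j) = a j) (htop : a (g : ℤ) ≠ 0)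
    (q : ℤ) (hq : 1 ≤ q)
    (S : AddMonoidAlgebra ℤ (ℤ × ℤ))
    (hS : S = (AddMonoidAlgebra.of' ℤ (ℤ × ℤ) (-1, 0)
              - AddMonoidAlgebra.of' ℤ (ℤ × ℤ) (1, 0)) ^ (2 * g)
            * ∑ j ∈ Finset.Icc (-(g : ℤ)) (g : ℤ),
                a j • AddMonoidAlgebra.of' ℤ (ℤ × ℤ) (2 * j, 2 * j * q)) :
    (∀ p ∈ S.coeff.support, |p.2| ≤ 2 * (g : ℤ) * q ∧ |p.1| ≤ 4 * (g : ℤ)) ∧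
      ((0 : ℤ), 2 * (g : ℤ) * q) ∈ S.coeff.support := by
  have hq0 : q ≠ 0 := by omega
  have hS2 : S = ∑ m ∈ Finset.range (2*g+1), ∑ j ∈ Finset.Icc (-(g:ℤ)) (g:ℤ),
      AddMonoidAlgebra.single ((2*(g:ℤ) - 2*m + 2*j, 2*j*q) : ℤ × ℤ)
        ((-1:ℤ)^m * (Nat.choose (2*g) m : ℤ) * a j) := by
    rw [hS, sub_pow, Finset.sum_mul_sum]
    refine Finset.sum_congr rfl fun m hm => Finset.sum_congr rfl fun j hj => ?_
    have h1 : (-1 : AddMonoidAlgebra ℤ (ℤ × ℤ)) = AddMonoidAlgebra.single (0 : ℤ × ℤ) (-1 : ℤ) := by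
      rw [eq_comm, AddMonoidAlgebra.single_neg]; rfl
    have h2 : ((Nat.choose (2*g) m : ℕ) : AddMonoidAlgebra ℤ (ℤ × ℤ))
        = AddMonoidAlgebra.single (0 : ℤ × ℤ) ((Nat.choose (2*g) m : ℤ)) :=
      AddMonoidAlgebra.natCast_def _
    simp only [AddMonoidAlgebra.of'_apply, AddMonoidAlgebra.single_pow, one_pow, h1, h2,
      AddMonoidAlgebra.single_mul_single, AddMonoidAlgebra.smul_single', mul_one,
      smul_eq_mul]
    rw [Finset.mem_range] at hm
    congr 1
    · simp only [Prod.ext_iff, Prod.smul_mk, Prod.mk_add_mk, smul_zero, Prod.fst_add, Prod.snd_add,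
        smul_eq_mul, Prod.mk_zero_zero, Prod.fst_zero, Prod.snd_zero, nsmul_eq_mul, mul_neg,
        mul_one, add_zero, zero_add, mul_zero]
      push_cast [Nat.cast_sub (by omega : m ≤ 2*g)]
      exact ⟨by ring, trivial⟩
    · rw [pow_add, pow_mul, neg_one_sq, one_pow]; ring
  constructor
  · intro p hp
    rw [hS2, AddMonoidAlgebra.coeff_sum] at hp
    obtain ⟨m, hm, hps⟩ := Finset.mem_biUnion.mp (Finsupp.support_finset_sum hp)
    rw [AddMonoidAlgebra.coeff_sum] at hps
    obtain ⟨j, hj, hps2⟩ := Finset.mem_biUnion.mp (Finsupp.support_finset_sum hps)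
    rw [AddMonoidAlgebra.coeff_single] at hps2
    have hpeq : p = ((2*(g:ℤ) - 2*m + 2*j, 2*j*q) : ℤ × ℤ) := by
      have := Finsupp.support_single_subset hps2
      simpa using this
    rw [Finset.mem_range] at hm
    rw [Finset.mem_Icc] at hj
    subst hpeq
    constructor
    · show |2*j*q| ≤ 2*(g:ℤ)*q
      rw [abs_mul, abs_of_nonneg (by omega : (0:ℤ) ≤ q)]
      have h2j : |2*j| ≤ 2*(g:ℤ) := abs_le.mpr ⟨by omega, by omega⟩
      exact mul_le_mul_of_nonneg_right h2j (by omega)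
    · show |2*(g:ℤ) - 2*m + 2*j| ≤ 4*(g:ℤ)
      rw [abs_le]
      constructor <;> omega
  · rw [Finsupp.mem_support_iff, hS2]
    have hval : (∑ m ∈ Finset.range (2*g+1), ∑ j ∈ Finset.Icc (-(g:ℤ)) (g:ℤ),
        AddMonoidAlgebra.single ((2*(g:ℤ) - 2*m + 2*j, 2*j*q) : ℤ × ℤ)
          ((-1:ℤ)^m * (Nat.choose (2*g) m : ℤ) * a j)).coeff ((0 : ℤ), 2 * (g : ℤ) * q)
        = a (g : ℤ) := by
      rw [AddMonoidAlgebra.coeff_sum, Finsupp.finset_sum_apply]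
      rw [Finset.sum_eq_single (2*g)]
      · rw [AddMonoidAlgebra.coeff_sum, Finsupp.finset_sum_apply]
        rw [Finset.sum_eq_single ((g : ℤ))]
        · rw [AddMonoidAlgebra.coeff_single, Finsupp.single_apply, if_pos (by rw [Prod.mk.injEq]; exact ⟨by push_cast; ring, rfl⟩)]
          rw [Nat.choose_self]
          have : ((-1:ℤ))^(2*g) = 1 := by rw [pow_mul, neg_one_sq, one_pow]
          rw [this]; ring
        · intro j hj hjne
          rw [AddMonoidAlgebra.coeff_single, Finsupp.single_apply, if_neg]
          rintro h
          rw [Prod.mk.injEq] at h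
          obtain ⟨h1, h2⟩ := h
          apply hjne
          have h3 : j * q = (g:ℤ) * q := by linarith
          exact mul_right_cancel₀ hq0 h3
        · intro h
          exact absurd (Finset.mem_Icc.mpr ⟨by omega, le_refl _⟩) h
      · intro m hm hmne
        rw [AddMonoidAlgebra.coeff_sum, Finsupp.finset_sum_apply]
        apply Finset.sum_eq_zero
        intro j hj
        rw [AddMonoidAlgebra.coeff_single, Finsupp.single_apply, if_neg]
        rintro h
        rw [Prod.mk.injEq] at h
        obtain ⟨h1, h2⟩ := h
        have h3 : j * q = (g:ℤ) * q := by linarith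
        have hjg : j = (g : ℤ) := mul_right_cancel₀ hq0 h3
        subst hjg
        apply hmne
        omega
      · intro h
        exact absurd (Finset.mem_range.mpr (by omega)) h
    rw [hval]
    exact htop
end

section
/- Let g ≥ 1 and let Δ = ∑_{j=-g}^{g} a_j U^j be a symmetric Laurent polynomial with integer coefficients (a_{-j} = a_j for all j) whose top coefficient a_g is nonzero. For an integer q ≥ 1 define S_q := (X^{(-1,0)} − X^{(1,0)})^{2g} · ∑_{j=-g}^{g} a_j X^{(2j, 2jq)} ∈ ℤ[ℤ × ℤ]. Define the divisibility of a pair (a,b) ∈ ℤ × ℤ as gcd(|a|, |b|) (with gcd(0,n) = n). Then the maximum of the divisibilities of the elements of the support of S_q is exactly 2gq: every (a,b) in the support satisfies gcd(|a|,|b|) ≤ 2gq, and the element (0, 2gq) lies in the support and has divisibility 2gq. -/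
open AddMonoidAlgebra Finsupp

private lemma D_pow_support (n : ℕ) :
    ∀ p ∈ (((AddMonoidAlgebra.of' ℤ (ℤ × ℤ) (-1, 0)
        - AddMonoidAlgebra.of' ℤ (ℤ × ℤ) (1, 0)) ^ n).coeff.support),
      p.2 = 0 ∧ |p.1| ≤ (n : ℤ) := by
  classical
  induction n with
  | zero =>
      intro p hp
      rw [pow_zero, AddMonoidAlgebra.one_def] at hp
      have := Finsupp.support_single_subset hp
      simp only [Finset.mem_singleton] at this
      subst this
      simp
  | succ n ih =>
      intro p hp
      rw [pow_succ] at hp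
      have := AddMonoidAlgebra.support_coeff_mul_subset _ _ hp
      rw [Finset.mem_add] at this
      obtain ⟨x, hx, y, hy, rfl⟩ := this
      have hx' := ih x hx
      have hDy : y = ((-1 : ℤ), (0 : ℤ)) ∨ y = ((1 : ℤ), (0 : ℤ)) := by
        have h1 : y ∈ (AddMonoidAlgebra.of' ℤ (ℤ × ℤ) (-1, 0)).coeff.support ∪
            (AddMonoidAlgebra.of' ℤ (ℤ × ℤ) (1, 0)).coeff.support :=
          Finsupp.support_sub hy
        rcases Finset.mem_union.1 h1 with h | h
        · left; simpa using Finsupp.support_single_subset h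
        · right; simpa using Finsupp.support_single_subset h
      rcases hDy with rfl | rfl <;>
        · refine ⟨by simp [hx'.1], ?_⟩
          have := hx'.2
          have h1 : |x.1 + ((-1 : ℤ), (0 : ℤ)).1| ≤ |x.1| + 1 := by
            simpa using (abs_add_le x.1 _).trans (by simp)
          have h2 : |x.1 + ((1 : ℤ), (0 : ℤ)).1| ≤ |x.1| + 1 := by
            simpa using (abs_add_le x.1 _).trans (by simp)
          push_cast
          first
          | exact h1.trans (by omega)
          | exact h2.trans (by omega)

private lemma D_pow_coeff (n : ℕ) :
    ((AddMonoidAlgebra.of' ℤ (ℤ × ℤ) (-1, 0)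
        - AddMonoidAlgebra.of' ℤ (ℤ × ℤ) (1, 0)) ^ n).coeff ((-(n : ℤ), 0)) = 1 := by
  classical
  induction n with
  | zero => simp [AddMonoidAlgebra.one_def, Finsupp.single_apply, Prod.ext_iff]
  | succ n ih =>
      rw [pow_succ, mul_sub]
      simp only [AddMonoidAlgebra.of']
      rw [AddMonoidAlgebra.coeff_sub, Finsupp.sub_apply, AddMonoidAlgebra.coeff_mul_single_apply,
        AddMonoidAlgebra.coeff_mul_single_apply]
      rw [← sub_eq_add_neg, ← sub_eq_add_neg]
      have e1 : ((-(↑(n + 1) : ℤ), (0:ℤ)) - (-1, 0)) = ((-(n : ℤ), 0)) := by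
        simp only [Prod.mk_sub_mk, Prod.mk.injEq]; omega
      have e2 : ((-(↑(n + 1) : ℤ), (0:ℤ)) - (1, 0)) = ((-(n : ℤ) - 2, 0)) := by
        simp only [Prod.mk_sub_mk, Prod.mk.injEq]; omega
      rw [e1, e2]
      have h0 : ((AddMonoidAlgebra.of' ℤ (ℤ × ℤ) (-1, 0)
          - AddMonoidAlgebra.of' ℤ (ℤ × ℤ) (1, 0)) ^ n).coeff ((-(n : ℤ) - 2, 0)) = 0 := by
        by_contra h
        have := D_pow_support n _ (Finsupp.mem_support_iff.2 h)
        simp only at this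
        have := this.2
        rw [abs_le] at this
        omega
      simp only [AddMonoidAlgebra.of'] at h0 ih
      rw [h0, ih]
      ring

/-- With `S_q := (X^{(-1,0)} − X^{(1,0)})^{2g} · ∑_{j=-g}^{g} a_j X^{(2j,2jq)}`
in `ℤ[ℤ × ℤ]`, where `g ≥ 1`, `q ≥ 1`, the coefficients `a_j` are symmetric and `a_g ≠ 0`:
the maximal divisibility `gcd(|a|,|b|)` of an element `(a,b)` of the support of `S_q` is
exactly `2gq`; it is attained at `(0, 2gq)`, which lies in the support. -/
theorem max_divisibility_of_support
    (g : ℕ) (hg : 1 ≤ g) (a : ℤ → ℤ)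
    (hsym : ∀ j : ℤ, a (-j) = a j) (htop : a (g : ℤ) ≠ 0)
    (q : ℤ) (hq : 1 ≤ q)
    (S : AddMonoidAlgebra ℤ (ℤ × ℤ))
    (hS : S = (AddMonoidAlgebra.of' ℤ (ℤ × ℤ) (-1, 0)
              - AddMonoidAlgebra.of' ℤ (ℤ × ℤ) (1, 0)) ^ (2 * g)
            * ∑ j ∈ Finset.Icc (-(g : ℤ)) (g : ℤ),
                a j • AddMonoidAlgebra.of' ℤ (ℤ × ℤ) (2 * j, 2 * j * q)) :
    (∀ p ∈ S.coeff.support, (Int.gcd p.1 p.2 : ℤ) ≤ 2 * (g : ℤ) * q) ∧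
      ((0 : ℤ), 2 * (g : ℤ) * q) ∈ S.coeff.support ∧
      (Int.gcd 0 (2 * (g : ℤ) * q) : ℤ) = 2 * (g : ℤ) * q := by
  classical
  have hq0 : (0 : ℤ) < q := hq
  have hgq0 : (0 : ℤ) ≤ 2 * (g : ℤ) * q := by positivity
  -- key coefficient computation
  have hcoeff : S.coeff ((0 : ℤ), 2 * (g : ℤ) * q) = a (g : ℤ) := by
    rw [hS, Finset.mul_sum]
    rw [AddMonoidAlgebra.coeff_sum, Finsupp.finset_sum_apply]
    have hterm : ∀ j ∈ Finset.Icc (-(g : ℤ)) (g : ℤ),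
        ((AddMonoidAlgebra.of' ℤ (ℤ × ℤ) (-1, 0)
          - AddMonoidAlgebra.of' ℤ (ℤ × ℤ) (1, 0)) ^ (2 * g)
          * (a j • AddMonoidAlgebra.of' ℤ (ℤ × ℤ) (2 * j, 2 * j * q))).coeff
          ((0 : ℤ), 2 * (g : ℤ) * q)
        = ((AddMonoidAlgebra.of' ℤ (ℤ × ℤ) (-1, 0)
          - AddMonoidAlgebra.of' ℤ (ℤ × ℤ) (1, 0)) ^ (2 * g)).coeff
            ((-(2 * j), 2 * (g : ℤ) * q - 2 * j * q)) * a j := by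
      intro j _
      have : (a j • AddMonoidAlgebra.of' ℤ (ℤ × ℤ) (2 * j, 2 * j * q))
          = AddMonoidAlgebra.single ((2 * j, 2 * j * q) : ℤ × ℤ) (a j) := by
        simp [AddMonoidAlgebra.of', Finsupp.smul_single']
      rw [this, AddMonoidAlgebra.coeff_mul_single_apply]
      congr 1
      simp [Prod.ext_iff, sub_eq_add_neg]
    rw [Finset.sum_congr rfl hterm]
    rw [Finset.sum_eq_single_of_mem ((g : ℤ))
      (by rw [Finset.mem_Icc]; constructor <;> omega)]
    · have e : ((-(2 * (g : ℤ)), 2 * (g : ℤ) * q - 2 * (g : ℤ) * q))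
          = ((-((2 * g : ℕ) : ℤ), (0 : ℤ))) := by
        simp only [Prod.mk.injEq]
        constructor <;> [push_cast; skip] <;> ring
      rw [e, D_pow_coeff]
      ring
    · intro j hj hjne
      have h2 : 2 * (g : ℤ) * q - 2 * j * q ≠ 0 := by
        intro h
        apply hjne
        have : 2 * ((g : ℤ) - j) * q = 0 := by ring_nf; ring_nf at h; linarith
        rcases mul_eq_zero.1 this with h' | h'
        · rcases mul_eq_zero.1 h' with h'' | h''
          · norm_num at h''
          · linarith
        · omega
      have h0 : ((AddMonoidAlgebra.of' ℤ (ℤ × ℤ) (-1, 0)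
          - AddMonoidAlgebra.of' ℤ (ℤ × ℤ) (1, 0)) ^ (2 * g)).coeff
            ((-(2 * j), 2 * (g : ℤ) * q - 2 * j * q)) = 0 := by
        by_contra h
        have := D_pow_support (2 * g) _ (Finsupp.mem_support_iff.2 h)
        exact h2 this.1
      rw [h0, zero_mul]
  refine ⟨?_, ?_, ?_⟩
  · -- bound on divisibility
    intro p hp
    rw [hS] at hp
    have hp' := AddMonoidAlgebra.support_coeff_mul_subset _ _ hp
    rw [Finset.mem_add] at hp'
    obtain ⟨x, hx, y, hy, rfl⟩ := hp'
    have hx' := D_pow_support (2 * g) x hx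
    have hy' : ∃ j : ℤ, -(g : ℤ) ≤ j ∧ j ≤ (g : ℤ) ∧ y = ((2 * j, 2 * j * q) : ℤ × ℤ) := by
      rw [AddMonoidAlgebra.coeff_sum] at hy
      have := Finsupp.support_finset_sum hy
      rw [Finset.mem_biUnion] at this
      obtain ⟨j, hj, hyj⟩ := this
      have hsub : (a j • AddMonoidAlgebra.of' ℤ (ℤ × ℤ) (2 * j, 2 * j * q)).coeff.support
          ⊆ {((2 * j, 2 * j * q) : ℤ × ℤ)} := by
        refine (Finsupp.support_smul).trans ?_
        exact Finsupp.support_single_subset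
      have := hsub hyj
      rw [Finset.mem_singleton] at this
      rw [Finset.mem_Icc] at hj
      exact ⟨j, hj.1, hj.2, this⟩
    obtain ⟨j, hj1, hj2, rfl⟩ := hy'
    have hx2 := hx'.1
    have hx1 := hx'.2
    by_cases hj0 : j = 0
    · subst hj0
      have hsnd : (x + ((2 * (0:ℤ), 2 * (0:ℤ) * q) : ℤ × ℤ)).2 = 0 := by
        simp [hx2]
      have hfst : |(x + ((2 * (0:ℤ), 2 * (0:ℤ) * q) : ℤ × ℤ)).1| ≤ 2 * (g : ℤ) := by
        simpa using hx1.trans (by push_cast; ring_nf; exact le_refl _)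
      rw [hsnd]
      have : (Int.gcd (x + ((2 * (0:ℤ), 2 * (0:ℤ) * q) : ℤ × ℤ)).1 0 : ℤ)
          = |(x + ((2 * (0:ℤ), 2 * (0:ℤ) * q) : ℤ × ℤ)).1| := by
        rw [Int.gcd_zero_right]
        exact (Int.abs_eq_natAbs _).symm
      rw [this]
      calc |(x + ((2 * (0:ℤ), 2 * (0:ℤ) * q) : ℤ × ℤ)).1| ≤ 2 * (g : ℤ) := hfst
        _ = 2 * (g : ℤ) * 1 := by ring
        _ ≤ 2 * (g : ℤ) * q := by
            apply mul_le_mul_of_nonneg_left hq (by positivity)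
    · have hsnd : (x + ((2 * j, 2 * j * q) : ℤ × ℤ)).2 = 2 * j * q := by
        simp [hx2]
      have hne : 2 * j * q ≠ 0 := by
        intro h
        rcases mul_eq_zero.1 h with h' | h'
        · rcases mul_eq_zero.1 h' with h'' | h'' <;> omega
        · omega
      have hdvd : (Int.gcd (x + ((2 * j, 2 * j * q) : ℤ × ℤ)).1
          (x + ((2 * j, 2 * j * q) : ℤ × ℤ)).2 : ℤ)
          ∣ (x + ((2 * j, 2 * j * q) : ℤ × ℤ)).2 := Int.gcd_dvd_right _ _
      have hle : (Int.gcd (x + ((2 * j, 2 * j * q) : ℤ × ℤ)).1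
          (x + ((2 * j, 2 * j * q) : ℤ × ℤ)).2 : ℤ)
          ≤ |(x + ((2 * j, 2 * j * q) : ℤ × ℤ)).2| := by
        refine Int.le_of_dvd (abs_pos.2 (by rw [hsnd]; exact hne)) ?_
        exact (dvd_abs _ _).2 hdvd
      refine hle.trans ?_
      rw [hsnd]
      have : |2 * j * q| = 2 * |j| * q := by
        rw [abs_mul, abs_mul]
        simp [abs_of_pos hq0]
      rw [this]
      have : |j| ≤ (g : ℤ) := abs_le.2 ⟨hj1, hj2⟩
      nlinarith
  · rw [Finsupp.mem_support_iff, hcoeff]; exact htop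
  · rw [Int.gcd_zero_left]
    rw [Int.natAbs_of_nonneg hgq0]
end

section
/- Let g ≥ 1 and let Δ = ∑_{j=-g}^{g} a_j U^j be a symmetric Laurent polynomial with integer coefficients (a_{-j} = a_j for all j) whose top coefficient a_g is nonzero. For an integer q ≥ 1 define S_q := (X^{(-1,0)} − X^{(1,0)})^{2g} · ∑_{j=-g}^{g} a_j X^{(2j, 2jq)} ∈ ℤ[ℤ × ℤ]. Suppose q, q' ≥ 1 and there exists a group automorphism φ of ℤ × ℤ such that the induced ring automorphism of ℤ[ℤ × ℤ] (sending X^{v} to X^{φ(v)}) maps S_{q'} to S_q. Then q = q'. -/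
open Finset AddMonoidAlgebra

lemma expandS (g : ℕ) (a : ℤ → ℤ) (q : ℤ) :
    (of' ℤ (ℤ × ℤ) (-1, 0) - of' ℤ (ℤ × ℤ) (1, 0)) ^ (2 * g)
      * ∑ j ∈ Icc (-(g : ℤ)) (g : ℤ), a j • of' ℤ (ℤ × ℤ) (2 * j, 2 * j * q)
    = ∑ m ∈ range (2 * g + 1), ∑ j ∈ Icc (-(g : ℤ)) (g : ℤ),
        AddMonoidAlgebra.single ((2*(g:ℤ) - 2*m + 2*j, 2*j*q) : ℤ × ℤ)
          ((-1 : ℤ) ^ (m + 2*g) * ((2*g).choose m) * a j) := by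
  have hneg : (-1 : AddMonoidAlgebra ℤ (ℤ×ℤ)) = AddMonoidAlgebra.single (0:ℤ×ℤ) (-1:ℤ) := by
    rw [AddMonoidAlgebra.one_def]; exact (AddMonoidAlgebra.single_neg _ _).symm
  rw [sub_pow, Finset.sum_mul]
  refine Finset.sum_congr rfl fun m hm => ?_
  rw [Finset.mul_sum]
  refine Finset.sum_congr rfl fun j hj => ?_
  rw [mem_range] at hm
  have h1 : ((-1 : AddMonoidAlgebra ℤ (ℤ×ℤ)) ^ (m + 2*g))
      = AddMonoidAlgebra.single (0:ℤ×ℤ) ((-1:ℤ)^(m+2*g)) := by rw [hneg, single_pow]; simp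
  have h2 : (((2*g).choose m : AddMonoidAlgebra ℤ (ℤ×ℤ)))
      = AddMonoidAlgebra.single (0:ℤ×ℤ) (((2*g).choose m : ℤ)) := by
    simp [AddMonoidAlgebra.natCast_def]
  have hx : (of' ℤ (ℤ×ℤ) (-1,0))^m = AddMonoidAlgebra.single (((-(m:ℤ), 0)) : ℤ×ℤ) (1:ℤ) := by
    rw [of'_apply, single_pow, one_pow]
    congr 1
    ext <;> simp
  have hy : (of' ℤ (ℤ×ℤ) (1,0))^(2*g-m)
      = AddMonoidAlgebra.single (((2*(g:ℤ) - m, 0)) : ℤ×ℤ) (1:ℤ) := by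
    rw [of'_apply, single_pow, one_pow]
    congr 1
    ext <;> simp <;> omega
  have hsm : a j • of' ℤ (ℤ×ℤ) (2*j, 2*j*q) = AddMonoidAlgebra.single ((2*j, 2*j*q) : ℤ×ℤ) (a j) := by
    rw [of'_apply, AddMonoidAlgebra.smul_single]; simp
  rw [h1, h2, hx, hy, hsm, single_mul_single, single_mul_single, single_mul_single,
    single_mul_single]
  congr 1
  · ext <;> simp <;> ring
  · ring

private lemma matrix_apply (ψ : (ℤ×ℤ) ≃+ (ℤ×ℤ)) (v : ℤ×ℤ) :
    ψ v = (v.1 * (ψ (1,0)).1 + v.2 * (ψ (0,1)).1,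
           v.1 * (ψ (1,0)).2 + v.2 * (ψ (0,1)).2) := by
  have hv : v = v.1 • ((1,0) : ℤ×ℤ) + v.2 • ((0,1) : ℤ×ℤ) := by
    ext <;> simp
  conv_lhs => rw [hv]
  rw [map_add, map_zsmul, map_zsmul]
  ext <;> simp [mul_comm]

private lemma coeff_S {g : ℕ} {a : ℤ → ℤ} {q : ℤ} (hq : q ≠ 0) {m : ℕ} (hm : m ≤ 2*g)
    {j : ℤ} (hj1 : -(g:ℤ) ≤ j) (hj2 : j ≤ g) :
    (∑ m ∈ range (2 * g + 1), ∑ j ∈ Icc (-(g : ℤ)) (g : ℤ),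
        AddMonoidAlgebra.single ((2*(g:ℤ) - 2*m + 2*j, 2*j*q) : ℤ × ℤ)
          ((-1 : ℤ) ^ (m + 2*g) * ((2*g).choose m) * a j)).coeff
      ((2*(g:ℤ) - 2*m + 2*j, 2*j*q) : ℤ × ℤ)
    = (-1 : ℤ) ^ (m + 2*g) * ((2*g).choose m) * a j := by
  rw [coeff_sum, Finset.sum_apply']
  rw [Finset.sum_eq_single_of_mem m (mem_range.2 (by omega))]
  · rw [coeff_sum, Finset.sum_apply']
    rw [Finset.sum_eq_single_of_mem j (mem_Icc.2 ⟨hj1, hj2⟩)]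
    · simp
    · intro j' _ hne
      rw [coeff_single, Finsupp.single_apply, if_neg]
      intro h
      apply hne
      have h2 := congrArg Prod.snd h
      simp only at h2
      have : 2*j'*q = 2*j*q := h2
      exact mul_right_cancel₀ hq (by linarith)
  · intro m' _ hne
    rw [coeff_sum, Finset.sum_apply']
    apply Finset.sum_eq_zero
    intro j' _
    rw [coeff_single, Finsupp.single_apply, if_neg]
    intro h
    have h2 := congrArg Prod.snd h
    simp only at h2
    have hj' : j' = j := by
      have : 2*j'*q = 2*j*q := h2
      exact mul_right_cancel₀ hq (by linarith)
    subst hj'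
    have h1 := congrArg Prod.fst h
    simp only at h1
    exact hne (by omega)

private lemma supp_S {g : ℕ} {a : ℤ → ℤ} {q : ℤ} {v : ℤ×ℤ}
    (h : (∑ m ∈ range (2 * g + 1), ∑ j ∈ Icc (-(g : ℤ)) (g : ℤ),
        AddMonoidAlgebra.single ((2*(g:ℤ) - 2*m + 2*j, 2*j*q) : ℤ × ℤ)
          ((-1 : ℤ) ^ (m + 2*g) * ((2*g).choose m) * a j)).coeff v ≠ 0) :
    ∃ m : ℕ, m ≤ 2*g ∧ ∃ j : ℤ, -(g:ℤ) ≤ j ∧ j ≤ g ∧ a j ≠ 0 ∧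
      v = ((2*(g:ℤ) - 2*m + 2*j, 2*j*q) : ℤ×ℤ) := by
  rw [coeff_sum, Finset.sum_apply'] at h
  obtain ⟨m, hm, h⟩ := Finset.exists_ne_zero_of_sum_ne_zero h
  rw [coeff_sum, Finset.sum_apply'] at h
  obtain ⟨j, hj, h⟩ := Finset.exists_ne_zero_of_sum_ne_zero h
  rw [coeff_single, Finsupp.single_apply] at h
  rw [mem_range] at hm
  rw [mem_Icc] at hj
  refine ⟨m, by omega, j, hj.1, hj.2, ?_, ?_⟩
  · intro ha
    rw [ha, mul_zero] at h
    simp at h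
  · by_contra hne
    rw [if_neg (fun hh => hne hh.symm)] at h
    exact h rfl

private lemma dvd_aux (g : ℕ) (hg : 1 ≤ g) (a : ℤ → ℤ)
    (hsym : ∀ j : ℤ, a (-j) = a j) (htop : a (g : ℤ) ≠ 0)
    (q q' : ℤ) (hq : 1 ≤ q) (hq' : 1 ≤ q')
    (S S' : AddMonoidAlgebra ℤ (ℤ × ℤ))
    (hS : S = ∑ m ∈ range (2 * g + 1), ∑ j ∈ Icc (-(g : ℤ)) (g : ℤ),
        AddMonoidAlgebra.single ((2*(g:ℤ) - 2*m + 2*j, 2*j*q) : ℤ × ℤ)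
          ((-1 : ℤ) ^ (m + 2*g) * ((2*g).choose m) * a j))
    (hS' : S' = ∑ m ∈ range (2 * g + 1), ∑ j ∈ Icc (-(g : ℤ)) (g : ℤ),
        AddMonoidAlgebra.single ((2*(g:ℤ) - 2*m + 2*j, 2*j*q') : ℤ × ℤ)
          ((-1 : ℤ) ^ (m + 2*g) * ((2*g).choose m) * a j))
    (φ : (ℤ × ℤ) ≃+ (ℤ × ℤ))
    (hmap : ∀ v : ℤ×ℤ, S'.coeff v ≠ 0 → S.coeff (φ v) ≠ 0) :
    q ∣ q' := by
  have hq0 : q ≠ 0 := by omega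
  have hq'0 : q' ≠ 0 := by omega
  set A := (φ ((1,0) : ℤ×ℤ)).1 with hA
  set B := (φ ((0,1) : ℤ×ℤ)).1 with hB
  set C := (φ ((1,0) : ℤ×ℤ)).2 with hC
  set D := (φ ((0,1) : ℤ×ℤ)).2 with hD
  -- nonvanishing of S' at lattice points
  have hne : ∀ m : ℕ, m ≤ 2*g → ∀ j : ℤ, -(g:ℤ) ≤ j → j ≤ g → a j ≠ 0 →
      S'.coeff ((2*(g:ℤ)-2*m+2*j, 2*j*q') : ℤ×ℤ) ≠ 0 := by
    intro m hm j hj1 hj2 ha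
    rw [hS', coeff_S hq'0 hm hj1 hj2]
    exact mul_ne_zero (mul_ne_zero (pow_ne_zero _ (by norm_num))
      (Int.natCast_ne_zero.2 (Nat.choose_pos hm).ne')) ha
  -- the subgroup of differences of indices
  set Jset : Set ℤ := {x : ℤ | ∃ j j' : ℤ, -(g:ℤ) ≤ j ∧ j ≤ g ∧ -(g:ℤ) ≤ j' ∧ j' ≤ g ∧
      a j ≠ 0 ∧ a j' ≠ 0 ∧ x = j - j'} with hJset
  obtain ⟨d, hd⟩ := Int.subgroup_cyclic (AddSubgroup.closure Jset)
  have hbot : a (-(g:ℤ)) ≠ 0 := by rw [hsym]; exact htop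
  have h2g : (2*(g:ℤ)) ∈ AddSubgroup.closure Jset := AddSubgroup.subset_closure
    ⟨(g:ℤ), -(g:ℤ), by norm_num, le_refl _, le_refl _, by omega, htop, hbot, by ring⟩
  have hd0 : d ≠ 0 := by
    intro h0
    rw [hd, h0] at h2g
    obtain ⟨n, hn⟩ := AddSubgroup.mem_closure_singleton.1 h2g
    simp at hn
    omega
  -- all second-coordinate differences of the support of S are divisible by 2*q*d
  have div2qd : ∀ v w : ℤ×ℤ, S.coeff v ≠ 0 → S.coeff w ≠ 0 → (2*q*d) ∣ (v.2 - w.2) := by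
    intro v w hv hw
    rw [hS] at hv hw
    obtain ⟨m1, hm1, j1, hj11, hj12, ha1, hv1⟩ := supp_S hv
    obtain ⟨m2, hm2, j2, hj21, hj22, ha2, hv2⟩ := supp_S hw
    have hmem : j1 - j2 ∈ AddSubgroup.closure Jset :=
      AddSubgroup.subset_closure ⟨j1, j2, hj11, hj12, hj21, hj22, ha1, ha2, rfl⟩
    rw [hd] at hmem
    obtain ⟨n, hn⟩ := AddSubgroup.mem_closure_singleton.1 hmem
    refine ⟨n, ?_⟩
    rw [hv1, hv2]
    simp only
    rw [smul_eq_mul] at hn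
    nlinarith [hn]
  -- q*d divides C
  have key2 : ∀ v : ℤ×ℤ, (φ v).2 = v.1 * C + v.2 * D := by
    intro v
    rw [matrix_apply φ v]
  have hCdvd : q*d ∣ C := by
    have hs1 := hne 0 (by omega) g (by omega) (le_refl _) htop
    have hs2 := hne 1 (by omega) g (by omega) (le_refl _) htop
    have hdvd := div2qd _ _ (hmap _ hs1) (hmap _ hs2)
    rw [key2, key2] at hdvd
    obtain ⟨n, hn⟩ := hdvd
    refine ⟨n, ?_⟩
    have h2 : 2*C = 2*(q*d*n) := by push_cast at hn; linear_combination hn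
    linarith
  have hCq : q ∣ C := dvd_trans ⟨d, rfl⟩ hCdvd
  -- q*d divides x*(q'*D) for every x in the closure
  have hgen : ∀ x ∈ AddSubgroup.closure Jset, q*d ∣ x * (q' * D) := by
    intro x hx
    induction hx using AddSubgroup.closure_induction with
    | mem x hxJ =>
      obtain ⟨j, j', hj1, hj2, hj1', hj2', ha, ha', rfl⟩ := hxJ
      set m : ℕ := (j - j').toNat with hm
      set m' : ℕ := (j' - j).toNat with hm'
      have hmle : m ≤ 2*g := by omega
      have hm'le : m' ≤ 2*g := by omega
      have hs1 := hne m hmle j hj1 hj2 ha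
      have hs2 := hne m' hm'le j' hj1' hj2' ha'
      have hdvd := div2qd _ _ (hmap _ hs1) (hmap _ hs2)
      rw [key2, key2] at hdvd
      obtain ⟨n, hn⟩ := hdvd
      have hmm' : (m : ℤ) - m' = j - j' := by omega
      refine ⟨n, ?_⟩
      have h2 : 2*((j - j') * (q' * D)) = 2*(q*d*n) := by
        linear_combination hn + 2*C*hmm'
      linarith
    | zero => exact Dvd.intro 0 (by ring)
    | add x y _ _ ihx ihy =>
      have : (x + y) * (q' * D) = x * (q' * D) + y * (q' * D) := by ring
      rw [this]; exact dvd_add ihx ihy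
    | neg x _ ihx =>
      have : (-x) * (q' * D) = -(x * (q' * D)) := by ring
      rw [this]; exact dvd_neg.2 ihx
  have hdK : d ∈ AddSubgroup.closure Jset := by
    rw [hd]; exact AddSubgroup.subset_closure rfl
  have hDq : q ∣ q' * D := by
    obtain ⟨n, hn⟩ := hgen d hdK
    refine ⟨n, ?_⟩
    have : d * (q' * D) = d * (q * n) := by rw [hn]; ring
    exact mul_left_cancel₀ hd0 this
  -- determinant is a unit
  set A' := (φ.symm ((1,0) : ℤ×ℤ)).1
  set B' := (φ.symm ((0,1) : ℤ×ℤ)).1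
  set C' := (φ.symm ((1,0) : ℤ×ℤ)).2
  set D' := (φ.symm ((0,1) : ℤ×ℤ)).2
  have e1 : φ.symm (φ ((1,0) : ℤ×ℤ)) = ((1,0) : ℤ×ℤ) := φ.symm_apply_apply _
  have e2 : φ.symm (φ ((0,1) : ℤ×ℤ)) = ((0,1) : ℤ×ℤ) := φ.symm_apply_apply _
  rw [matrix_apply φ.symm] at e1 e2
  have h1 : A * A' + C * B' = 1 := congrArg Prod.fst e1
  have h2 : A * C' + C * D' = 0 := congrArg Prod.snd e1
  have h3 : B * A' + D * B' = 0 := congrArg Prod.fst e2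
  have h4 : B * C' + D * D' = 1 := congrArg Prod.snd e2
  have hdet : (A*D - B*C) * (A'*D' - B'*C') = 1 := by linear_combination (B*C' + D*D')*h1 + h4 - (A*C' + C*D')*h3
  have h5 : q ∣ q' * (A*D - B*C) := by
    have hexp : q' * (A*D - B*C) = A*(q'*D) - (q'*B)*C := by ring
    rw [hexp]
    exact dvd_sub (hDq.mul_left A) (hCq.mul_left (q'*B))
  have h6 : q' * (A*D - B*C) ∣ q' := ⟨A'*D' - B'*C', by rw [mul_assoc, hdet, mul_one]⟩
  exact dvd_trans h5 h6

/-- Let `S_q := (X^{(-1,0)} − X^{(1,0)})^{2g} · ∑_{j=-g}^{g} a_j X^{(2j,2jq)}`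
in `ℤ[ℤ × ℤ]`, where `g ≥ 1`, the coefficients `a_j` are symmetric and `a_g ≠ 0`.  If
`q, q' ≥ 1` and some group automorphism `φ` of `ℤ × ℤ` induces a ring automorphism of
`ℤ[ℤ × ℤ]` carrying `S_{q'}` to `S_q`, then `q = q'`. -/
theorem aut_invariance_forces_q_eq
    (g : ℕ) (hg : 1 ≤ g) (a : ℤ → ℤ)
    (hsym : ∀ j : ℤ, a (-j) = a j) (htop : a (g : ℤ) ≠ 0)
    (q q' : ℤ) (hq : 1 ≤ q) (hq' : 1 ≤ q')
    (S S' : AddMonoidAlgebra ℤ (ℤ × ℤ))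
    (hS : S = (AddMonoidAlgebra.of' ℤ (ℤ × ℤ) (-1, 0)
              - AddMonoidAlgebra.of' ℤ (ℤ × ℤ) (1, 0)) ^ (2 * g)
            * ∑ j ∈ Finset.Icc (-(g : ℤ)) (g : ℤ),
                a j • AddMonoidAlgebra.of' ℤ (ℤ × ℤ) (2 * j, 2 * j * q))
    (hS' : S' = (AddMonoidAlgebra.of' ℤ (ℤ × ℤ) (-1, 0)
              - AddMonoidAlgebra.of' ℤ (ℤ × ℤ) (1, 0)) ^ (2 * g)
            * ∑ j ∈ Finset.Icc (-(g : ℤ)) (g : ℤ),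
                a j • AddMonoidAlgebra.of' ℤ (ℤ × ℤ) (2 * j, 2 * j * q'))
    (φ : (ℤ × ℤ) ≃+ (ℤ × ℤ))
    (hφ : AddMonoidAlgebra.domCongr ℤ ℤ φ S' = S) :
    q = q' := by
  rw [expandS] at hS hS'
  have hfun : ∀ v : ℤ × ℤ, S.coeff (φ v) = S'.coeff v := by
    intro v
    rw [← hφ, AddMonoidAlgebra.coeff_domCongr, AddEquiv.symm_apply_apply]
  have hmap1 : ∀ v : ℤ × ℤ, S'.coeff v ≠ 0 → S.coeff (φ v) ≠ 0 := fun v h => by rw [hfun]; exact h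
  have hmap2 : ∀ v : ℤ × ℤ, S.coeff v ≠ 0 → S'.coeff (φ.symm v) ≠ 0 := by
    intro v h
    have := hfun (φ.symm v)
    rw [AddEquiv.apply_symm_apply] at this
    rw [← this]
    exact h
  have hd1 : q ∣ q' := dvd_aux g hg a hsym htop q q' hq hq' S S' hS hS' φ hmap1
  have hd2 : q' ∣ q := dvd_aux g hg a hsym htop q' q hq' hq S' S hS' hS φ.symm hmap2
  exact Int.dvd_antisymm (by omega) (by omega) hd1 hd2
end
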